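/- Let U be a finite nonempty universe, I a finite index set, S : I → Finset U, and c : I → ℝ with c i ≥ 0 for all i. Define u(K) = B − Σ_{i∈K} c i if ⋃_{i∈K} S i = U and u(K) = 0 otherwise. Suppose there exists a cover K₀ ⊆ I (i.e., ⋃_{i∈K₀} S i = U) with Σ_{i∈K₀} c i < B. Then every K* ⊆ I that maximizes u over all subsets of I is itself a cover of U, and K* achieves the minimum total cost Σ_{i∈K} c i among all covers K ⊆ I of U. -/
import Mathlib


/-- If some cover has total cost strictly below the budget, every utility-maximizing set
of workers is a cover and has minimum total cost among all covers. -/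
theorem sata_reduction_optimal_is_min_cover
    {U I : Type*} [Fintype U] [DecidableEq U] [Nonempty U] [Fintype I] [DecidableEq I]
    (S : I → Finset U) (c : I → ℝ) (hc : ∀ i, 0 ≤ c i) (B : ℝ)
    (u : Finset I → ℝ)
    (hu : ∀ K : Finset I,
      u K = if K.biUnion S = (Finset.univ : Finset U) then B - ∑ i ∈ K, c i else 0)
    (K₀ : Finset I) (hK₀ : K₀.biUnion S = (Finset.univ : Finset U))
    (hK₀cost : ∑ i ∈ K₀, c i < B) :
    ∀ Kstar : Finset I, (∀ K : Finset I, u K ≤ u Kstar) →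
      Kstar.biUnion S = (Finset.univ : Finset U) ∧
      ∀ K : Finset I, K.biUnion S = (Finset.univ : Finset U) →
        ∑ i ∈ Kstar, c i ≤ ∑ i ∈ K, c i := by
  intro Kstar hmax
  have h0 : 0 < u K₀ := by rw [hu, if_pos hK₀]; linarith
  have hle := hmax K₀
  have hcov : Kstar.biUnion S = (Finset.univ : Finset U) := by
    by_contra h
    rw [hu Kstar, if_neg h] at hle
    linarith
  refine ⟨hcov, fun K hK => ?_⟩
  have := hmax K
  rw [hu K, if_pos hK, hu Kstar, if_pos hcov] at this
  linarith
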